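/- Let C be a completed PDAG and x − y an undirected edge such that the common neighbor set N_{xy} is a clique in C. Let P' be the mixed graph obtained from C by deleting the undirected edge x − y. Then P' is a chain graph, every chain component of P' is chordal, no induced subgraph of the form w → u − v with w, v nonadjacent occurs in P', and every directed edge of P' is strongly protected; hence P' is itself a completed PDAG. -/

import Mathlib

structure MixedGraph (V : Type*) where
  dir : V → V → Prop
  undir : V → V → Prop
  undir_symm : ∀ x y, undir x y → undir y x
  dir_irrefl : ∀ x, ¬ dir x x
  undir_irrefl : ∀ x, ¬ undir x x
  dir_asymm : ∀ x y, dir x y → ¬ dir y x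
  not_both : ∀ x y, dir x y → ¬ undir x y

namespace MixedGraph

variable {V : Type*} (G : MixedGraph V)

/-- `a` and `b` are joined by some edge, oriented from `a` to `b` if directed. -/
def edge (a b : V) : Prop := G.dir a b ∨ G.undir a b

/-- `a` and `b` are adjacent (joined by a directed or undirected edge). -/
def adj (a b : V) : Prop := G.dir a b ∨ G.dir b a ∨ G.undir a b

/-- The consecutive (cyclic) pairs of the cycle `v :: l`. -/
def cyclePairs (v : V) (l : List V) : List (V × V) := (v :: l).zip (l ++ [v])

/-- `v :: l` is a partially directed cycle: at least two distinct vertices, every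
cyclically consecutive pair joined by an edge (directed forward or undirected),
and at least one such edge directed. -/
def IsPDCycle (v : V) (l : List V) : Prop :=
  l ≠ [] ∧ (v :: l).Nodup ∧
  (∀ p ∈ cyclePairs v l, G.edge p.1 p.2) ∧
  (∃ p ∈ cyclePairs v l, G.dir p.1 p.2)

/-- A chain graph contains no partially directed cycle. -/
def IsChainGraph : Prop := ∀ (v : V) (l : List V), ¬ G.IsPDCycle v l

/-- `v :: l` is an undirected cycle of length at least 4. -/
def IsUCycle (v : V) (l : List V) : Prop :=
  4 ≤ (v :: l).length ∧ (v :: l).Nodup ∧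
  (∀ p ∈ cyclePairs v l, G.undir p.1 p.2)

/-- The cycle `v :: l` has a chord: an undirected edge between two vertices of the
cycle that is not one of the cycle's edges. -/
def HasChord (v : V) (l : List V) : Prop :=
  ∃ a b, a ∈ v :: l ∧ b ∈ v :: l ∧ G.undir a b ∧
    (a, b) ∉ cyclePairs v l ∧ (b, a) ∉ cyclePairs v l

/-- Every undirected cycle of length at least 4 has a chord; equivalently every
chain component induces a chordal undirected graph. -/
def IsChordalUndir : Prop := ∀ v l, G.IsUCycle v l → G.HasChord v l

/-- No induced subgraph `w → u − v` with `w, v` nonadjacent. -/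
def NoFlag : Prop := ∀ w u v, G.dir w u → G.undir u v → G.adj w v

/-- The directed edge `v → u` is strongly protected: it occurs in one of the four
protecting configurations. -/
def StronglyProtected (v u : V) : Prop :=
  (∃ w, G.dir w v ∧ ¬ G.adj w u) ∨
  (∃ w, G.dir w u ∧ w ≠ v ∧ ¬ G.adj v w) ∨
  (∃ w, G.dir v w ∧ G.dir w u) ∨
  (∃ w w₁, w ≠ w₁ ∧ G.undir v w ∧ G.undir v w₁ ∧ G.dir w u ∧ G.dir w₁ u ∧
    ¬ G.adj w w₁)

/-- Andersson's characterization: a completed PDAG (essential graph) is a chain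
graph with chordal chain components, no induced flag `w → u − v`, and all
directed edges strongly protected. -/
def IsCompletedPDAG : Prop :=
  G.IsChainGraph ∧ G.IsChordalUndir ∧ G.NoFlag ∧
  ∀ v u, G.dir v u → G.StronglyProtected v u

/-- The neighbour set of `v`: vertices joined to `v` by an undirected edge. -/
def nbhd (v : V) : Set V := {u | G.undir v u}

/-- The parent set of `v`: vertices with a directed edge into `v`. -/
def parents (v : V) : Set V := {u | G.dir u v}

end MixedGraph

namespace StmtAux

open MixedGraph

variable {V : Type*}

lemma zipRot1 {α β : Type*} : ∀ {L : List α} {M : List β}, L.length = M.length →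
    (L.rotate 1).zip (M.rotate 1) = (L.zip M).rotate 1
  | [], [], _ => by simp
  | a :: L, b :: M, h => by
    have h' : L.length = M.length := by simpa using h
    simp [List.rotate_cons_succ, List.zip_append h']
  | [], _ :: _, h => by simp at h
  | _ :: _, [], h => by simp at h

lemma zipRot {α β : Type*} {L : List α} {M : List β} (h : L.length = M.length) :
    ∀ n, (L.rotate n).zip (M.rotate n) = (L.zip M).rotate n
  | 0 => by simp
  | n + 1 => by
    rw [← List.rotate_rotate L n 1, ← List.rotate_rotate M n 1,
      zipRot1 (by simp [h]), zipRot h n, List.rotate_rotate]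

lemma cyclePairs_eq (v : V) (l : List V) :
    cyclePairs v l = (v :: l).zip ((v :: l).rotate 1) := by
  have : (v :: l).rotate 1 = l ++ [v] := by
    rw [show (1 : ℕ) = 0 + 1 from rfl, List.rotate_cons_succ, List.rotate_zero]
  rw [this, cyclePairs]

lemma mem_cyclePairs_rotate {v a : V} {l l₁ : List V} {k : ℕ}
    (h : (v :: l).rotate k = a :: l₁) (p : V × V) :
    p ∈ cyclePairs a l₁ ↔ p ∈ cyclePairs v l := by
  rw [cyclePairs_eq, cyclePairs_eq, ← h]
  have h2 : ((v :: l).rotate k).rotate 1 = ((v :: l).rotate 1).rotate k := by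
    rw [List.rotate_rotate, List.rotate_rotate, Nat.add_comm]
  rw [h2, zipRot (by simp) k, List.mem_rotate]

lemma cyclePairs_split (a b : V) (L2 L3 : List V) :
    cyclePairs a (L2 ++ b :: L3) =
      (a :: L2).zip (L2 ++ [b]) ++ (b :: L3).zip (L3 ++ [a]) := by
  have h : (a :: L2).length = (L2 ++ [b]).length := by simp
  calc cyclePairs a (L2 ++ b :: L3)
      = ((a :: L2) ++ (b :: L3)).zip ((L2 ++ [b]) ++ (L3 ++ [a])) := by
        simp [cyclePairs]
    _ = _ := List.zip_append h

lemma cyclePairs_arc (a b : V) (M : List V) :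
    cyclePairs a (M ++ [b]) = (a :: M).zip (M ++ [b]) ++ [(b, a)] := by
  have h : (a :: M).length = (M ++ [b]).length := by simp
  calc cyclePairs a (M ++ [b])
      = ((a :: M) ++ [b]).zip ((M ++ [b]) ++ [a]) := by simp [cyclePairs]
    _ = _ := by rw [List.zip_append h]; simp

lemma triangle_false (G : MixedGraph V) (hchain : G.IsChainGraph)
    {a b c : V} (h1 : G.dir a b) (h2 : G.undir b c) (h3 : G.undir c a) : False := by
  have hab : a ≠ b := fun h => G.dir_irrefl a (h ▸ h1)
  have hbc : b ≠ c := fun h => G.undir_irrefl b (h ▸ h2)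
  have hca : c ≠ a := fun h => G.undir_irrefl c (h ▸ h3)
  apply hchain a [b, c]
  refine ⟨by simp, by simp [hab, hbc, Ne.symm hca], ?_, ⟨(a, b), by simp [cyclePairs], h1⟩⟩
  intro p hp
  simp [cyclePairs] at hp
  rcases hp with h | h | h <;> subst h
  · exact Or.inl h1
  · exact Or.inr h2
  · exact Or.inr h3

lemma arc_chord (G : MixedGraph V) (hchord : G.IsChordalUndir)
    {a b : V} {L2 L3 : List V}
    (hnd : (a :: (L2 ++ b :: L3)).Nodup)
    (hund : ∀ p ∈ cyclePairs a (L2 ++ b :: L3), G.undir p.1 p.2)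
    (hab : G.undir a b) (hL2 : 2 ≤ L2.length) :
    ∃ c d, c ∈ a :: (L2 ++ b :: L3) ∧ d ∈ a :: (L2 ++ b :: L3) ∧ G.undir c d ∧
      (c, d) ∉ cyclePairs a (L2 ++ b :: L3) ∧ (d, c) ∉ cyclePairs a (L2 ++ b :: L3) ∧
      (c, d) ≠ (a, b) ∧ (c, d) ≠ (b, a) := by
  have hsplit := cyclePairs_split a b L2 L3
  have harc := cyclePairs_arc a b L2
  -- disjointness of the arc a :: (L2 ++ [b]) from L3
  have hnd2 : ((a :: (L2 ++ [b])) ++ L3).Nodup := by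
    have he : (a :: (L2 ++ [b])) ++ L3 = a :: (L2 ++ b :: L3) := by simp
    rw [he]; exact hnd
  have hdisj : ∀ z ∈ a :: (L2 ++ [b]), z ∉ L3 := (List.nodup_append'.mp hnd2).2.2
  -- the arc cycle is an undirected cycle
  have hcyc1 : G.IsUCycle a (L2 ++ [b]) := by
    refine ⟨by simp; omega, ?_, ?_⟩
    · have hsub : (a :: (L2 ++ [b])).Sublist (a :: (L2 ++ b :: L3)) := by
        refine List.Sublist.cons₂ a (List.Sublist.append_left ?_ L2)
        exact List.Sublist.cons₂ b (List.nil_sublist L3)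
      exact hnd.sublist hsub
    · intro p hp
      rw [harc] at hp
      rcases List.mem_append.mp hp with hp | hp
      · exact hund p (by rw [hsplit]; exact List.mem_append_left _ hp)
      · have : p = (b, a) := by simpa using hp
        subst this; exact G.undir_symm a b hab
  obtain ⟨c, d, hc, hd, hcd, h1, h2⟩ := hchord a (L2 ++ [b]) hcyc1
  rw [harc] at h1 h2
  have hba_mem : (b, a) ∈ (a :: L2).zip (L2 ++ [b]) ++ [(b, a)] := by simp
  -- (c,d) and (d,c) are not in the second-arc pairs Q
  have hQ : ∀ e f : V, e ∈ a :: (L2 ++ [b]) → f ∈ a :: (L2 ++ [b]) →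
      (e, f) ∈ (b :: L3).zip (L3 ++ [a]) → e = b ∧ f = a := by
    intro e f he hf hmem
    obtain ⟨he', hf'⟩ := List.of_mem_zip hmem
    constructor
    · rcases List.mem_cons.mp he' with h | h
      · exact h
      · exact absurd h (hdisj e he)
    · rcases List.mem_append.mp hf' with h | h
      · exact absurd h (hdisj f hf)
      · simpa using h
  refine ⟨c, d, ?_, ?_, hcd, ?_, ?_, ?_, ?_⟩
  · simp only [List.mem_cons, List.mem_append] at hc ⊢; tauto
  · simp only [List.mem_cons, List.mem_append] at hd ⊢; tauto
  · rw [hsplit]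
    intro hmem
    rcases List.mem_append.mp hmem with h | h
    · exact h1 (List.mem_append_left _ h)
    · obtain ⟨rfl, rfl⟩ := hQ c d hc hd h
      exact h1 hba_mem
  · rw [hsplit]
    intro hmem
    rcases List.mem_append.mp hmem with h | h
    · exact h2 (List.mem_append_left _ h)
    · obtain ⟨rfl, rfl⟩ := hQ d c hd hc h
      exact h2 hba_mem
  · intro h
    have hc' : c = a := congrArg Prod.fst h
    have hd' : d = b := congrArg Prod.snd h
    subst hc'; subst hd'
    exact h2 hba_mem
  · intro h
    have hc' : c = b := congrArg Prod.fst h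
    have hd' : d = a := congrArg Prod.snd h
    subst hc'; subst hd'
    exact h1 hba_mem

lemma deleted_chord (G : MixedGraph V) (hchain : G.IsChainGraph)
    (hchord : G.IsChordalUndir)
    {a b : V} (hab : G.undir a b)
    (hcl : ∀ p, G.undir a p → G.undir b p → ∀ q, G.undir a q → G.undir b q →
      p ≠ q → G.adj p q)
    {v : V} {l : List V} (hcyc : G.IsUCycle v l)
    (ha : a ∈ v :: l) (hb : b ∈ v :: l)
    (hnab : (a, b) ∉ cyclePairs v l) (hnba : (b, a) ∉ cyclePairs v l) :
    ∃ c d, c ∈ v :: l ∧ d ∈ v :: l ∧ G.undir c d ∧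
      (c, d) ∉ cyclePairs v l ∧ (d, c) ∉ cyclePairs v l ∧
      (c, d) ≠ (a, b) ∧ (c, d) ≠ (b, a) := by
  classical
  obtain ⟨hlen, hnd, hund⟩ := hcyc
  set k := (v :: l).idxOf a with hk_def
  have hk : k < (v :: l).length := List.idxOf_lt_length_iff.mpr ha
  have hrot0 : (v :: l).rotate k = a :: ((v :: l).drop (k + 1) ++ (v :: l).take k) := by
    rw [List.rotate_eq_drop_append_take hk.le, List.drop_eq_getElem_cons hk,
      List.getElem_idxOf hk]
    simp
  obtain ⟨l₁, hrot⟩ : ∃ l₁, (v :: l).rotate k = a :: l₁ := ⟨_, hrot0⟩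
  have hmem : ∀ z : V, z ∈ a :: l₁ ↔ z ∈ v :: l := by
    intro z; rw [← hrot, List.mem_rotate]
  have hpair : ∀ p : V × V, p ∈ cyclePairs a l₁ ↔ p ∈ cyclePairs v l :=
    mem_cyclePairs_rotate hrot
  have hnd1 : (a :: l₁).Nodup := by rw [← hrot]; exact List.nodup_rotate.mpr hnd
  have hlen1 : 4 ≤ (a :: l₁).length := by rw [← hrot, List.length_rotate]; exact hlen
  have hund1 : ∀ p ∈ cyclePairs a l₁, G.undir p.1 p.2 :=
    fun p hp => hund p ((hpair p).mp hp)
  have hba : b ≠ a := fun h => G.undir_irrefl a (h ▸ hab)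
  have hb1 : b ∈ l₁ := by
    rcases List.mem_cons.mp ((hmem b).mpr hb) with h | h
    · exact absurd h hba
    · exact h
  obtain ⟨L2, L3, rfl⟩ := List.append_of_mem hb1
  have hnab' : (a, b) ∉ cyclePairs a (L2 ++ b :: L3) :=
    fun h => hnab ((hpair _).mp h)
  have hnba' : (b, a) ∉ cyclePairs a (L2 ++ b :: L3) :=
    fun h => hnba ((hpair _).mp h)
  have hL2 : L2 ≠ [] := by
    rintro rfl
    exact hnab' (by simp [cyclePairs])
  have hL3 : L3 ≠ [] := by
    rintro rfl
    exact hnba' (by rw [cyclePairs_arc]; simp)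
  have hL2p : 0 < L2.length := List.length_pos_iff.mpr hL2
  have hL3p : 0 < L3.length := List.length_pos_iff.mpr hL3
  by_cases h2 : 2 ≤ L2.length
  · -- long first arc
    obtain ⟨c, d, hc, hd, hcd, hp1, hp2, hne1, hne2⟩ :=
      arc_chord G hchord hnd1 hund1 hab h2
    exact ⟨c, d, (hmem c).mp hc, (hmem d).mp hd, hcd,
      fun h => hp1 ((hpair _).mpr h), fun h => hp2 ((hpair _).mpr h), hne1, hne2⟩
  by_cases h3 : 2 ≤ L3.length
  · -- long second arc: use the swapped cycle b :: (L3 ++ a :: L2)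
    have hperm : (a :: (L2 ++ b :: L3)).Perm (b :: (L3 ++ a :: L2)) := by
      have e1 : a :: (L2 ++ b :: L3) = (a :: L2) ++ (b :: L3) := by simp
      have e2 : b :: (L3 ++ a :: L2) = (b :: L3) ++ (a :: L2) := by simp
      rw [e1, e2]; exact List.perm_append_comm
    have hpair_swap : ∀ p : V × V,
        p ∈ cyclePairs b (L3 ++ a :: L2) ↔ p ∈ cyclePairs a (L2 ++ b :: L3) := by
      intro p
      rw [cyclePairs_split, cyclePairs_split, List.mem_append, List.mem_append]
      tauto
    have hnd_swap : (b :: (L3 ++ a :: L2)).Nodup := hperm.nodup_iff.mp hnd1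
    have hund_swap : ∀ p ∈ cyclePairs b (L3 ++ a :: L2), G.undir p.1 p.2 :=
      fun p hp => hund1 p ((hpair_swap p).mp hp)
    obtain ⟨c, d, hc, hd, hcd, hp1, hp2, hne1, hne2⟩ :=
      arc_chord G hchord hnd_swap hund_swap (G.undir_symm a b hab) h3
    refine ⟨c, d, (hmem c).mp (hperm.mem_iff.mpr hc),
      (hmem d).mp (hperm.mem_iff.mpr hd), hcd,
      fun h => hp1 ((hpair_swap _).mpr ((hpair _).mpr h)),
      fun h => hp2 ((hpair_swap _).mpr ((hpair _).mpr h)), hne2, hne1⟩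
  · -- both arcs short: the clique case
    have hl2 : L2.length = 1 := by omega
    have hl3 : L3.length = 1 := by omega
    obtain ⟨p, rfl⟩ := List.length_eq_one_iff.mp hl2
    obtain ⟨q, rfl⟩ := List.length_eq_one_iff.mp hl3
    have hpairs : cyclePairs a ([p] ++ b :: [q]) = [(a, p), (p, b), (b, q), (q, a)] := by
      simp [cyclePairs]
    have hap : G.undir a p := hund1 (a, p) (by rw [hpairs]; simp)
    have hpb : G.undir p b := hund1 (p, b) (by rw [hpairs]; simp)
    have hbq : G.undir b q := hund1 (b, q) (by rw [hpairs]; simp)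
    have hqa : G.undir q a := hund1 (q, a) (by rw [hpairs]; simp)
    have hdist : a ≠ p ∧ a ≠ b ∧ a ≠ q ∧ p ≠ b ∧ p ≠ q ∧ b ≠ q := by
      have h : ([a, p, b, q] : List V).Nodup := by simpa using hnd1
      simp only [List.nodup_cons, List.mem_cons, List.not_mem_nil, or_false,
        List.nodup_nil, and_true, not_or] at h
      tauto
    obtain ⟨hap', hab', haq', hpb', hpq', hbq'⟩ := hdist
    have hadjpq : G.adj p q :=
      hcl p hap (G.undir_symm p b hpb) q (G.undir_symm q a hqa) hbq hpq'
    have hupq : G.undir p q := by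
      rcases hadjpq with h | h | h
      · exact absurd (triangle_false G hchain h hqa hap) id
      · exact absurd (triangle_false G hchain h hpb hbq) id
      · exact h
    have hmemp : p ∈ v :: l := (hmem p).mp (by simp)
    have hmemq : q ∈ v :: l := (hmem q).mp (by simp)
    refine ⟨p, q, hmemp, hmemq, hupq, ?_, ?_, ?_, ?_⟩
    · intro h
      have h' := (hpair _).mpr h
      rw [hpairs] at h'
      simp only [List.mem_cons, List.not_mem_nil, or_false, Prod.mk.injEq] at h'
      rcases h' with ⟨h1, _⟩ | ⟨_, h2⟩ | ⟨h1, _⟩ | ⟨h1, _⟩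
      · exact hap' h1.symm
      · exact hbq' h2.symm
      · exact hpb' h1
      · exact hpq' h1
    · intro h
      have h' := (hpair _).mpr h
      rw [hpairs] at h'
      simp only [List.mem_cons, List.not_mem_nil, or_false, Prod.mk.injEq] at h'
      rcases h' with ⟨h1, _⟩ | ⟨h1, _⟩ | ⟨h1, _⟩ | ⟨_, h2⟩
      · exact haq' h1.symm
      · exact hpq' h1.symm
      · exact hbq' h1.symm
      · exact hap' h2.symm
    · intro h
      exact hap' (congrArg Prod.fst h).symm
    · intro h
      exact hpb' (congrArg Prod.fst h)

end StmtAux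

/-- Deleting an undirected edge `x − y` of a completed PDAG whose common
neighbour set `N_x ∩ N_y` is a clique yields again a completed PDAG: a chain
graph with chordal chain components, no induced flag, and all directed edges
strongly protected. -/
theorem stmt13 {V : Type*} (G : MixedGraph V) (hG : G.IsCompletedPDAG)
    (x y : V) (hxy : G.undir x y)
    (hclique : ∀ a ∈ G.nbhd x ∩ G.nbhd y, ∀ b ∈ G.nbhd x ∩ G.nbhd y,
      a ≠ b → G.adj a b)
    (G' : MixedGraph V)
    (hdir : ∀ a b, G'.dir a b ↔ G.dir a b)
    (hundir : ∀ a b, G'.undir a b ↔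
      (G.undir a b ∧ ¬ ((a = x ∧ b = y) ∨ (a = y ∧ b = x)))) :
    G'.IsCompletedPDAG := by
  obtain ⟨hchain, hchord, hflag, hprotG⟩ := hG
  have hundir' : ∀ a b, G'.undir a b → G.undir a b := fun a b h => ((hundir a b).mp h).1
  have hadj' : ∀ a b, G'.adj a b → G.adj a b := by
    intro a b h
    rcases h with h | h | h
    · exact Or.inl ((hdir a b).mp h)
    · exact Or.inr (Or.inl ((hdir b a).mp h))
    · exact Or.inr (Or.inr (hundir' a b h))
  refine ⟨?_, ?_, ?_, ?_⟩
  · -- chain graph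
    intro v l ⟨h1, h2, h3, h4⟩
    apply hchain v l
    refine ⟨h1, h2, ?_, ?_⟩
    · intro p hp
      rcases h3 p hp with h | h
      · exact Or.inl ((hdir _ _).mp h)
      · exact Or.inr (hundir' _ _ h)
    · obtain ⟨p, hp, hd⟩ := h4
      exact ⟨p, hp, (hdir _ _).mp hd⟩
  · -- chordal
    intro v l ⟨hlen, hnd, hu⟩
    have huG : ∀ p ∈ MixedGraph.cyclePairs v l, G.undir p.1 p.2 :=
      fun p hp => hundir' _ _ (hu p hp)
    obtain ⟨c, d, hc, hd, hcd, h1, h2⟩ := hchord v l ⟨hlen, hnd, huG⟩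
    by_cases hdel : (c = x ∧ d = y) ∨ (c = y ∧ d = x)
    · have hclcd : ∀ p, G.undir c p → G.undir d p → ∀ q, G.undir c q → G.undir d q →
          p ≠ q → G.adj p q := by
        rcases hdel with ⟨rfl, rfl⟩ | ⟨rfl, rfl⟩
        · intro p h1p h2p q h1q h2q hpq
          exact hclique p ⟨h1p, h2p⟩ q ⟨h1q, h2q⟩ hpq
        · intro p h1p h2p q h1q h2q hpq
          exact hclique p ⟨h2p, h1p⟩ q ⟨h2q, h1q⟩ hpq
      obtain ⟨c', d', hc', hd', hcd', h1', h2', hne1, hne2⟩ :=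
        StmtAux.deleted_chord G hchain hchord hcd hclcd ⟨hlen, hnd, huG⟩ hc hd h1 h2
      refine ⟨c', d', hc', hd', (hundir c' d').mpr ⟨hcd', ?_⟩, h1', h2'⟩
      rcases hdel with ⟨rfl, rfl⟩ | ⟨rfl, rfl⟩
      · rintro (⟨rfl, rfl⟩ | ⟨rfl, rfl⟩)
        · exact hne1 rfl
        · exact hne2 rfl
      · rintro (⟨rfl, rfl⟩ | ⟨rfl, rfl⟩)
        · exact hne2 rfl
        · exact hne1 rfl
    · exact ⟨c, d, hc, hd, (hundir c d).mpr ⟨hcd, hdel⟩, h1, h2⟩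
  · -- no flag
    intro w u v hwu huv
    have hwuG : G.dir w u := (hdir _ _).mp hwu
    have huvG : G.undir u v := hundir' _ _ huv
    rcases hflag w u v hwuG huvG with h | h | h
    · exact Or.inl ((hdir _ _).mpr h)
    · exact Or.inr (Or.inl ((hdir _ _).mpr h))
    · exact absurd (StmtAux.triangle_false G hchain hwuG huvG (G.undir_symm w v h)) id
  · -- strong protection
    intro v u hvu
    have hvuG : G.dir v u := (hdir _ _).mp hvu
    have protB : ∀ w : V, G.undir v w → G.dir w u → ¬ G'.undir v w →
        G'.StronglyProtected v u := by
      intro w hvw hwu hnvw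
      refine Or.inr (Or.inl ⟨w, (hdir _ _).mpr hwu,
        fun heq => G.undir_irrefl v (heq ▸ hvw), ?_⟩)
      rintro (h | h | h)
      · exact G.not_both v w ((hdir _ _).mp h) hvw
      · exact G.not_both w v ((hdir _ _).mp h) (G.undir_symm v w hvw)
      · exact hnvw h
    rcases hprotG v u hvuG with ⟨w, h1, h2⟩ | ⟨w, h1, h2, h3⟩ | ⟨w, h1, h2⟩ |
      ⟨w, w₁, h0, h1, h2, h3, h4, h5⟩
    · exact Or.inl ⟨w, (hdir _ _).mpr h1, fun h => h2 (hadj' _ _ h)⟩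
    · exact Or.inr (Or.inl ⟨w, (hdir _ _).mpr h1, h2, fun h => h3 (hadj' _ _ h)⟩)
    · exact Or.inr (Or.inr (Or.inl ⟨w, (hdir _ _).mpr h1, (hdir _ _).mpr h2⟩))
    · by_cases hb1 : G'.undir v w
      · by_cases hb2 : G'.undir v w₁
        · exact Or.inr (Or.inr (Or.inr ⟨w, w₁, h0, hb1, hb2, (hdir _ _).mpr h3,
            (hdir _ _).mpr h4, fun h => h5 (hadj' _ _ h)⟩))
        · exact protB w₁ h2 h4 hb2
      · exact protB w h1 h3 hb1
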